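/- If p ≡ 3 (mod 4) is prime, then exactly one of the equations x² - p y² = 2 and x² - p y² = -2 has a solution in integers x, y. -/

import Mathlib

open Pell

private lemma factor_half (p : ℕ) (hp : p.Prime) {u v z : ℤ} (hu : 0 < u) (hv : 0 < v)
    (hcop : IsCoprime u v) (h : u * v = (p : ℤ) * z ^ 2) (hpu : (p : ℤ) ∣ u) :
    ∃ b c : ℤ, u = (p : ℤ) * c ^ 2 ∧ v = b ^ 2 := by
  have hp0 : (0 : ℤ) < p := by exact_mod_cast hp.pos
  obtain ⟨u', rfl⟩ := hpu
  have hu' : 0 < u' := by nlinarith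
  have h' : u' * v = z ^ 2 := by
    have := h
    rw [mul_assoc] at this
    exact mul_left_cancel₀ hp0.ne' this
  have hcop' : IsCoprime u' v := hcop.of_isCoprime_of_dvd_left (dvd_mul_left u' p)
  obtain ⟨a, ha⟩ := Int.sq_of_isCoprime hcop' h'
  obtain ⟨b, hb⟩ := Int.sq_of_isCoprime hcop'.symm (by linarith [h'] : v * u' = z ^ 2)
  have ha' : u' = a ^ 2 := by
    rcases ha with ha | ha
    · exact ha
    · nlinarith [sq_nonneg a]
  have hb' : v = b ^ 2 := by
    rcases hb with hb | hb
    · exact hb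
    · nlinarith [sq_nonneg b]
  exact ⟨b, a, by rw [ha'], hb'⟩

private lemma factor_aux (p : ℕ) (hp : p.Prime) {u v z : ℤ} (hu : 0 < u) (hv : 0 < v)
    (hcop : IsCoprime u v) (h : u * v = (p : ℤ) * z ^ 2) :
    (∃ b c : ℤ, u = b ^ 2 ∧ v = (p : ℤ) * c ^ 2) ∨
    (∃ b c : ℤ, u = (p : ℤ) * c ^ 2 ∧ v = b ^ 2) := by
  have hpZ : Prime (p : ℤ) := Nat.prime_iff_prime_int.mp hp
  have hdvd : (p : ℤ) ∣ u * v := ⟨z ^ 2, h⟩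
  rcases hpZ.dvd_mul.mp hdvd with hpu | hpv
  · exact Or.inr (factor_half p hp hu hv hcop h hpu)
  · obtain ⟨b, c, h1, h2⟩ := factor_half p hp hv hu hcop.symm (by linarith) hpv
    exact Or.inl ⟨b, c, h2, h1⟩


private lemma excl_aux (p : ℕ) (hp : p.Prime) (h3 : p % 4 = 3)
    (h2 : ∃ x y : ℤ, x ^ 2 - (p : ℤ) * y ^ 2 = 2)
    (hm2 : ∃ x y : ℤ, x ^ 2 - (p : ℤ) * y ^ 2 = -2) : False := by
  haveI : Fact p.Prime := ⟨hp⟩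
  obtain ⟨x, y, hxy⟩ := h2
  obtain ⟨u, v, huv⟩ := hm2
  have hx : (x : ZMod p) ^ 2 = 2 := by
    have := congrArg (Int.cast : ℤ → ZMod p) hxy
    push_cast at this
    simpa using this
  have hu : (u : ZMod p) ^ 2 = -2 := by
    have := congrArg (Int.cast : ℤ → ZMod p) huv
    push_cast at this
    simpa using this
  have h2ne : (2 : ZMod p) ≠ 0 := by
    have h := (ZMod.natCast_eq_zero_iff 2 p).not.mpr
      (fun hd => by have := Nat.le_of_dvd (by norm_num) hd; omega)
    exact_mod_cast h
  have : IsSquare (-1 : ZMod p) := by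
    refine ⟨(x : ZMod p) * u * 2⁻¹, ?_⟩
    field_simp
    linear_combination (-(u:ZMod p)^2) * hx - 2 * hu
  rw [ZMod.exists_sq_eq_neg_one_iff] at this
  exact this (by simpa using h3)

private lemma exists_one (p : ℕ) (hp : p.Prime) (h3 : p % 4 = 3) :
    (∃ x y : ℤ, x ^ 2 - (p : ℤ) * y ^ 2 = 2) ∨
    (∃ x y : ℤ, x ^ 2 - (p : ℤ) * y ^ 2 = -2) := by
  have hd0 : (0 : ℤ) < (p : ℤ) := by exact_mod_cast hp.pos
  have hdns : ¬IsSquare ((p : ℤ)) := Prime.not_isSquare (Nat.prime_iff_prime_int.mp hp)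
  obtain ⟨a, ha⟩ := Pell.IsFundamental.exists_of_not_isSquare hd0 hdns
  set X := a.x with hX
  set Y := a.y with hY
  have hprop : X ^ 2 - (p : ℤ) * Y ^ 2 = 1 := a.prop
  have hx1 : 1 < X := ha.1
  have hy0 : 0 < Y := ha.2.1
  have hpodd : p % 2 = 1 := by omega
  rcases Int.even_or_odd X with hXeven | hXodd
  · -- X even : X-1 and X+1 odd and coprime
    have hcop : IsCoprime (X - 1) (X + 1) := by
      rw [Int.isCoprime_iff_gcd_eq_one]
      have hg1 : (Int.gcd (X - 1) (X + 1) : ℤ) ∣ 2 := by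
        have h1 : (Int.gcd (X - 1) (X + 1) : ℤ) ∣ X - 1 := Int.gcd_dvd_left _ _
        have h2 : (Int.gcd (X - 1) (X + 1) : ℤ) ∣ X + 1 := Int.gcd_dvd_right _ _
        have : (Int.gcd (X - 1) (X + 1) : ℤ) ∣ (X + 1) - (X - 1) := dvd_sub h2 h1
        simpa using this
      have hg2 : (Int.gcd (X - 1) (X + 1) : ℤ) ∣ X - 1 := Int.gcd_dvd_left _ _
      obtain ⟨k, hk⟩ := hXeven
      have hgn : Int.gcd (X - 1) (X + 1) ∣ 2 := by exact_mod_cast hg1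
      rcases (Nat.dvd_prime Nat.prime_two).mp hgn with h | h
      · exact h
      · exfalso
        rw [h] at hg2
        obtain ⟨m, hm⟩ := hg2
        omega
    have hfac : (X - 1) * (X + 1) = (p : ℤ) * Y ^ 2 := by linear_combination hprop
    rcases factor_aux p hp (by linarith) (by linarith) hcop hfac with
      ⟨b, c, h1, h2⟩ | ⟨b, c, h1, h2⟩
    · exact Or.inr ⟨b, c, by linarith⟩
    · exact Or.inl ⟨b, c, by linarith⟩
  · -- X odd
    obtain ⟨k, hk⟩ := hXodd
    have hk1 : 1 ≤ k := by omega
    -- Y must be even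
    rcases Int.even_or_odd Y with hYe | hYo
    swap
    · exfalso
      obtain ⟨m, hm⟩ := hYo
      rw [hk, hm] at hprop
      have hp4 : (p : ℤ) = 4 * (k ^ 2 + k - (p : ℤ) * (m ^ 2 + m)) := by
        linear_combination -hprop
      omega
    obtain ⟨m, hm⟩ := hYe
    rw [hk, hm] at hprop
    have huv : k * (k + 1) = (p : ℤ) * m ^ 2 := by
      have h4 : (4 : ℤ) * (k * (k + 1)) = 4 * ((p : ℤ) * m ^ 2) := by
        linear_combination hprop
      exact mul_left_cancel₀ (by norm_num : (4:ℤ) ≠ 0) h4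
    have hcop : IsCoprime k (k + 1) := ⟨-1, 1, by ring⟩
    rcases factor_aux p hp (by omega) (by omega) hcop huv with
      ⟨b, c, h1, h2⟩ | ⟨b, c, h1, h2⟩
    · -- k = b², k+1 = p c² : b² ≡ -1 mod p, impossible
      exfalso
      haveI : Fact p.Prime := ⟨hp⟩
      have hbeq : b ^ 2 = (p : ℤ) * c ^ 2 - 1 := by linarith
      have hb : ((b : ZMod p)) ^ 2 = -1 := by
        have := congrArg (Int.cast : ℤ → ZMod p) hbeq
        push_cast at this
        simpa using this
      have hsq : IsSquare (-1 : ZMod p) := ⟨b, by rw [← hb]; ring⟩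
      rw [ZMod.exists_sq_eq_neg_one_iff] at hsq
      exact hsq (by simpa using h3)
    · -- k = p c², k+1 = b² : smaller Pell solution, contradiction with minimality
      exfalso
      have hb2 : |b| ^ 2 - (p : ℤ) * c ^ 2 = 1 := by
        rw [sq_abs]; linarith
      have hb2' : |b| ^ 2 = k + 1 := by rw [sq_abs]; omega
      have hbge : 2 ≤ |b| := by nlinarith [abs_nonneg b]
      have hle : X ≤ (Pell.Solution₁.mk |b| c hb2).x :=
        ha.2.2 (by rw [Pell.Solution₁.x_mk]; omega)
      rw [Pell.Solution₁.x_mk] at hle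
      nlinarith

theorem stmt_13 (p : ℕ) (hp : p.Prime) (h3 : p % 4 = 3) :
    Xor' (∃ x y : ℤ, x ^ 2 - (p : ℤ) * y ^ 2 = 2)
         (∃ x y : ℤ, x ^ 2 - (p : ℤ) * y ^ 2 = -2) := by
  rcases exists_one p hp h3 with h | h
  · exact Or.inl ⟨h, fun h' => excl_aux p hp h3 h h'⟩
  · exact Or.inr ⟨h, fun h' => excl_aux p hp h3 h' h⟩
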